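/- The polynomial encoding of EC coincides with external tangency: for circles a and b with positive radii, Δ(a,b) = (r_a + r_b)² if and only if the closed discs of a and b intersect in exactly one point. -/

import Mathlib

structure Circ where
  center : ℝ × ℝ
  radius : ℝ

noncomputable def Δ (a b : Circ) : ℝ :=
  (a.center.1 - b.center.1)^2 + (a.center.2 - b.center.2)^2

def closedDisc (c : Circ) : Set (ℝ × ℝ) :=
  {p | (p.1 - c.center.1)^2 + (p.2 - c.center.2)^2 ≤ c.radius^2}

set_option maxHeartbeats 2000000 in
theorem ec_iff_one_point (a b : Circ) (ha : 0 < a.radius) (hb : 0 < b.radius) :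
    Δ a b = (a.radius + b.radius)^2 ↔
      ∃! p : ℝ × ℝ, p ∈ closedDisc a ∧ p ∈ closedDisc b := by
  obtain ⟨⟨A1, A2⟩, ra⟩ := a
  obtain ⟨⟨B1, B2⟩, rb⟩ := b
  simp only [Δ, closedDisc, Set.mem_setOf_eq] at *
  -- dsimp removed
  have hab : 0 < ra + rb := by linarith
  set p : ℝ × ℝ := ((rb*A1+ra*B1)/(ra+rb), (rb*A2+ra*B2)/(ra+rb)) with hp
  have hpA1 : p.1 - A1 = ra*(B1-A1)/(ra+rb) := by rw [hp]; field_simp; ring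
  have hpA2 : p.2 - A2 = ra*(B2-A2)/(ra+rb) := by rw [hp]; field_simp; ring
  have hpB1 : p.1 - B1 = rb*(A1-B1)/(ra+rb) := by rw [hp]; field_simp; ring
  have hpB2 : p.2 - B2 = rb*(A2-B2)/(ra+rb) := by rw [hp]; field_simp; ring
  have hmem : (A1-B1)^2+(A2-B2)^2 ≤ (ra+rb)^2 →
      ((p.1-A1)^2+(p.2-A2)^2 ≤ ra^2 ∧ (p.1-B1)^2+(p.2-B2)^2 ≤ rb^2) := by
    intro hle
    constructor
    · rw [hpA1, hpA2, div_pow, div_pow, ← add_div, div_le_iff₀ (by positivity)]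
      nlinarith [mul_le_mul_of_nonneg_left hle (sq_nonneg ra)]
    · rw [hpB1, hpB2, div_pow, div_pow, ← add_div, div_le_iff₀ (by positivity)]
      nlinarith [mul_le_mul_of_nonneg_left hle (sq_nonneg rb)]
  constructor
  · intro hΔ
    refine ⟨p, hmem (le_of_eq hΔ), ?_⟩
    rintro ⟨q1, q2⟩ ⟨h1, h2⟩
    dsimp only at h1 h2
    have key : (rb*(q1-A1)+ra*(q1-B1))^2 + (rb*(q2-A2)+ra*(q2-B2))^2 ≤ 0 := by
      have expand : (rb*(q1-A1)+ra*(q1-B1))^2 + (rb*(q2-A2)+ra*(q2-B2))^2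
          = rb*(ra+rb)*((q1-A1)^2+(q2-A2)^2) + ra*(ra+rb)*((q1-B1)^2+(q2-B2)^2)
            - ra*rb*((A1-B1)^2+(A2-B2)^2) := by ring
      rw [expand, hΔ]
      nlinarith [mul_le_mul_of_nonneg_left h1 (le_of_lt (mul_pos hb hab)),
        mul_le_mul_of_nonneg_left h2 (le_of_lt (mul_pos ha hab))]
    have s1 : (rb*(q1-A1)+ra*(q1-B1))^2 = 0 :=
      le_antisymm (by linarith [sq_nonneg (rb*(q2-A2)+ra*(q2-B2))]) (sq_nonneg _)
    have s2 : (rb*(q2-A2)+ra*(q2-B2))^2 = 0 :=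
      le_antisymm (by linarith [sq_nonneg (rb*(q1-A1)+ra*(q1-B1))]) (sq_nonneg _)
    have e1 : rb*(q1-A1)+ra*(q1-B1) = 0 := by
      exact pow_eq_zero_iff two_ne_zero |>.mp s1
    have e2 : rb*(q2-A2)+ra*(q2-B2) = 0 := by
      exact pow_eq_zero_iff two_ne_zero |>.mp s2
    have hq1 : q1 = (rb*A1+ra*B1)/(ra+rb) := by
      rw [eq_div_iff (ne_of_gt hab)]; linarith
    have hq2 : q2 = (rb*A2+ra*B2)/(ra+rb) := by
      rw [eq_div_iff (ne_of_gt hab)]; linarith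
    rw [hp]
    exact Prod.ext hq1 hq2
  · rintro ⟨⟨q1, q2⟩, ⟨h1, h2⟩, huniq⟩
    dsimp only at h1 h2
    have hle : (A1-B1)^2+(A2-B2)^2 ≤ (ra+rb)^2 := by
      nlinarith [sq_nonneg ((q1-A1)*(q2-B2)-(q2-A2)*(q1-B1)),
        mul_le_mul h1 h2 (by positivity) (by positivity),
        sq_nonneg ((q1-A1)*(q1-B1)+(q2-A2)*(q2-B2)+ra*rb), mul_pos ha hb,
        sq_nonneg (q1-A1+q1-B1), sq_nonneg (q2-A2+q2-B2)]
    rcases eq_or_lt_of_le hle with h | hlt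
    · exact h
    · exfalso
      set D : ℝ := Real.sqrt ((A1-B1)^2+(A2-B2)^2) with hD
      have hD0 : 0 ≤ D := Real.sqrt_nonneg _
      have hD2 : D^2 = (A1-B1)^2+(A2-B2)^2 := Real.sq_sqrt (by positivity)
      have hDlt : D < ra + rb := by nlinarith
      set m : ℝ := min ra rb with hm
      have hm0 : 0 < m := lt_min ha hb
      have hma : m ≤ ra := min_le_left _ _
      have hmb : m ≤ rb := min_le_right _ _
      set ε : ℝ := m * (ra+rb-D)/(ra+rb) with he
      have hε : 0 < ε := by
        apply div_pos (mul_pos hm0 (by linarith)) hab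
      have hxD : B1 - A1 ≤ D := by nlinarith [sq_nonneg (A2-B2)]
      have hxD' : A1 - B1 ≤ D := by nlinarith [sq_nonneg (A2-B2)]
      set q : ℝ × ℝ := (p.1 + ε, p.2) with hq
      have hcε : (ra+rb) * ε = m * (ra+rb-D) := by
        rw [he]; field_simp
      have hqA : (q.1-A1)^2+(q.2-A2)^2 ≤ ra^2 := by
        have key : ((ra+rb)*(q.1-A1))^2 + ((ra+rb)*(q.2-A2))^2 ≤ ra^2*(ra+rb)^2 := by
          have e1 : (ra+rb)*(q.1-A1) = ra*(B1-A1) + m*(ra+rb-D) := by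
            rw [hq]; dsimp only
            have : q.1 - A1 = (p.1 - A1) + ε := by rw [hq]; ring
            rw [show p.1 + ε - A1 = (p.1 - A1) + ε by ring, hpA1, mul_add, hcε]
            field_simp
          have e2 : (ra+rb)*(q.2-A2) = ra*(B2-A2) := by
            rw [hq]; dsimp only
            rw [hpA2]; field_simp
          rw [e1, e2]
          have hD2a : ra^2*D^2 = ra^2*((A1-B1)^2+(A2-B2)^2) := by rw [hD2]
          linarith [mul_nonneg (mul_nonneg (by linarith : (0:ℝ) ≤ ra+rb-D)
              (by positivity : (0:ℝ) ≤ 2*ra*m)) (by linarith : (0:ℝ) ≤ D - (B1-A1)),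
            mul_nonneg (sq_nonneg (ra+rb-D)) (by nlinarith : (0:ℝ) ≤ ra^2 - m^2),
            mul_nonneg (mul_nonneg (by positivity : (0:ℝ) ≤ 2*D*ra)
              (by linarith : (0:ℝ) ≤ ra - m)) (by linarith : (0:ℝ) ≤ ra+rb-D), hD2a]
        have expand : ((ra+rb)*(q.1-A1))^2 + ((ra+rb)*(q.2-A2))^2
            = (ra+rb)^2*((q.1-A1)^2+(q.2-A2)^2) := by ring
        have key2 : (ra+rb)^2*((q.1-A1)^2+(q.2-A2)^2) ≤ (ra+rb)^2*ra^2 := by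
          linarith [key, expand]
        exact le_of_mul_le_mul_left key2 (by positivity)
      have hqB : (q.1-B1)^2+(q.2-B2)^2 ≤ rb^2 := by
        have key : ((ra+rb)*(q.1-B1))^2 + ((ra+rb)*(q.2-B2))^2 ≤ rb^2*(ra+rb)^2 := by
          have e1 : (ra+rb)*(q.1-B1) = rb*(A1-B1) + m*(ra+rb-D) := by
            rw [hq]; dsimp only
            rw [show p.1 + ε - B1 = (p.1 - B1) + ε by ring, hpB1, mul_add, hcε]
            field_simp
          have e2 : (ra+rb)*(q.2-B2) = rb*(A2-B2) := by
            rw [hq]; dsimp only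
            rw [hpB2]; field_simp
          rw [e1, e2]
          have hD2b : rb^2*D^2 = rb^2*((A1-B1)^2+(A2-B2)^2) := by rw [hD2]
          linarith [mul_nonneg (mul_nonneg (by linarith : (0:ℝ) ≤ ra+rb-D)
              (by positivity : (0:ℝ) ≤ 2*rb*m)) (by linarith : (0:ℝ) ≤ D - (A1-B1)),
            mul_nonneg (sq_nonneg (ra+rb-D)) (by nlinarith : (0:ℝ) ≤ rb^2 - m^2),
            mul_nonneg (mul_nonneg (by positivity : (0:ℝ) ≤ 2*D*rb)
              (by linarith : (0:ℝ) ≤ rb - m)) (by linarith : (0:ℝ) ≤ ra+rb-D), hD2b]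
        have expand : ((ra+rb)*(q.1-B1))^2 + ((ra+rb)*(q.2-B2))^2
            = (ra+rb)^2*((q.1-B1)^2+(q.2-B2)^2) := by ring
        have key2 : (ra+rb)^2*((q.1-B1)^2+(q.2-B2)^2) ≤ (ra+rb)^2*rb^2 := by
          linarith [key, expand]
        exact le_of_mul_le_mul_left key2 (by positivity)
      obtain ⟨hpA, hpB⟩ := hmem (le_of_lt hlt)
      have hup := huniq p ⟨hpA, hpB⟩
      have huq := huniq q ⟨hqA, hqB⟩
      have hpq : p = q := hup.trans huq.symm
      have h1' : p.1 = p.1 + ε := by conv_lhs => rw [hpq]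
      linarith
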